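/- arXiv:2108.12742 — 10 statements merged into one kernel-verified Lean document; each statement's English description precedes it below -/
import Mathlib

section
/- Let Δx > 0, let j ∈ ℤ, and let m, n ≥ 0 be natural numbers. Given arbitrary real numbers f_{j-m}, …, f_{j+n}, there exists a unique real polynomial P of degree at most m+n such that (1/Δx)∫_{I_k} P(x) dx = f_k for every k with j−m ≤ k ≤ j+n. -/
open MeasureTheory intervalIntegral Polynomial

lemma poly_intInt (P : Polynomial ℝ) (a b : ℝ) :
    IntervalIntegrable (fun x => P.eval x) volume a b :=
  P.continuous.intervalIntegrable a b

lemma exists_root_of_integral_zero (P : Polynomial ℝ) {a b : ℝ} (hab : a < b)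
    (h : ∫ x in a..b, P.eval x = 0) : ∃ c ∈ Set.Ioo a b, P.eval c = 0 := by
  set F : ℝ → ℝ := fun u => ∫ x in a..u, P.eval x with hFdef
  have hF : ∀ x : ℝ, HasDerivAt F (P.eval x) x := fun x =>
    integral_hasDerivAt_right (poly_intInt P a x)
      (P.continuous.aestronglyMeasurable.stronglyMeasurableAtFilter)
      P.continuous.continuousAt
  have hcont : ContinuousOn F (Set.Icc a b) := fun x _ =>
    (hF x).continuousAt.continuousWithinAt
  have hab' : F a = F b := by
    simp [hFdef, intervalIntegral.integral_same, h]
  exact exists_hasDerivAt_eq_zero hab hcont hab' (fun x _ => hF x)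

lemma eno_avg_zero (Δx : ℝ) (hΔx : 0 < Δx) (a : ℤ) (N : ℕ) (P : Polynomial ℝ)
    (hdeg : P.degree ≤ (N : ℕ))
    (h : ∀ k : ℤ, a ≤ k → k ≤ a + N →
      ∫ x in ((k : ℝ) * Δx - Δx / 2)..((k : ℝ) * Δx + Δx / 2), P.eval x = 0) :
    P = 0 := by
  have hroot : ∀ k ∈ Finset.Icc a (a + (N : ℤ)), ∃ c,
      c ∈ Set.Ioo ((k : ℝ) * Δx - Δx / 2) ((k : ℝ) * Δx + Δx / 2) ∧ P.eval c = 0 := by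
    intro k hk
    rw [Finset.mem_Icc] at hk
    have hab : (k : ℝ) * Δx - Δx / 2 < (k : ℝ) * Δx + Δx / 2 := by linarith
    obtain ⟨c, hc1, hc2⟩ := exists_root_of_integral_zero P hab (h k hk.1 hk.2)
    exact ⟨c, hc1, hc2⟩
  choose! c hc1 hc2 using hroot
  have hinj : Function.Injective
      (fun k : ↥(Finset.Icc a (a + (N : ℤ))) => c (k : ℤ)) := by
    have hmono : ∀ k k' : ℤ, k ∈ Finset.Icc a (a + (N : ℤ)) →
        k' ∈ Finset.Icc a (a + (N : ℤ)) → k < k' → c k < c k' := by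
      intro k k' hk hk' hlt
      have h1 := hc1 k hk
      have h2 := hc1 k' hk'
      have : (k : ℝ) + 1 ≤ (k' : ℝ) := by exact_mod_cast hlt
      have : (k : ℝ) * Δx + Δx / 2 ≤ (k' : ℝ) * Δx - Δx / 2 := by nlinarith
      have := h1.2
      have := h2.1
      linarith
    rintro ⟨k, hk⟩ ⟨k', hk'⟩ hckk
    simp only at hckk
    rcases lt_trichotomy k k' with hl | he | hl
    · exact absurd hckk (hmono k k' hk hk' hl).ne
    · exact Subtype.ext he
    · exact absurd hckk.symm (hmono k' k hk' hk hl).ne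
  apply Polynomial.eq_zero_of_natDegree_lt_card_of_eval_eq_zero P hinj
    (fun k => hc2 k k.2)
  have hcard : Fintype.card ↥(Finset.Icc a (a + (N : ℤ))) = N + 1 := by
    rw [Fintype.card_coe, Int.card_Icc]
    omega
  rw [hcard]
  exact Nat.lt_succ_of_le (Polynomial.natDegree_le_iff_degree_le.mpr hdeg)

noncomputable def enoT (Δx : ℝ) (a : ℤ) (N : ℕ) :
    Polynomial.degreeLT ℝ (N + 1) →ₗ[ℝ] (Fin (N + 1) → ℝ) where
  toFun p := fun i => (1 / Δx) *
    ∫ x in (((a + (i : ℕ) : ℤ) : ℝ) * Δx - Δx / 2)..(((a + (i : ℕ) : ℤ) : ℝ) * Δx + Δx / 2),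
      (p : Polynomial ℝ).eval x
  map_add' p q := by
    funext i
    simp only [Submodule.coe_add, Polynomial.eval_add, Pi.add_apply]
    rw [intervalIntegral.integral_add (poly_intInt _ _ _) (poly_intInt _ _ _)]
    ring
  map_smul' r p := by
    funext i
    simp only [SetLike.val_smul, Polynomial.eval_smul, smul_eq_mul, Pi.smul_apply,
      RingHom.id_apply]
    rw [intervalIntegral.integral_const_mul]
    ring


/-- Existence and uniqueness of the reconstruction polynomial of degree at most `m + n`
whose cell averages over the cells `I_k = [kΔx - Δx/2, kΔx + Δx/2]`, for
`j - m ≤ k ≤ j + n`, match the prescribed data `f k`. -/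
theorem eno_ao_reconstruction_exists_unique
    (Δx : ℝ) (hΔx : 0 < Δx) (j : ℤ) (m n : ℕ) (f : ℤ → ℝ) :
    ∃! P : Polynomial ℝ, P.degree ≤ (m + n : ℕ) ∧
      ∀ k : ℤ, j - m ≤ k → k ≤ j + n →
        (1 / Δx) * ∫ x in ((k : ℝ) * Δx - Δx / 2)..((k : ℝ) * Δx + Δx / 2), P.eval x
          = f k := by
  set N : ℕ := m + n with hN
  set a : ℤ := j - m with ha
  have haN : a + (N : ℤ) = j + n := by simp [ha, hN]; ring
  have hmem : ∀ P : Polynomial ℝ, P ∈ Polynomial.degreeLT ℝ (N + 1) ↔ P.degree ≤ (N : ℕ) := by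
    intro P
    rw [Polynomial.degreeLT_succ_eq_degreeLE, Polynomial.mem_degreeLE]
  -- injectivity of enoT
  have hinj : Function.Injective (enoT Δx a N) := by
    rw [← LinearMap.ker_eq_bot, LinearMap.ker_eq_bot']
    intro p hp
    have hz : (p : Polynomial ℝ) = 0 := by
      apply eno_avg_zero Δx hΔx a N _ ((hmem _).mp p.2)
      intro k hk1 hk2
      have hi : (k - a).toNat < N + 1 := by omega
      have := congrFun hp ⟨(k - a).toNat, hi⟩
      simp only [enoT, LinearMap.coe_mk, AddHom.coe_mk, Pi.zero_apply] at this
      have hak : (a + ((⟨(k - a).toNat, hi⟩ : Fin (N + 1)) : ℕ) : ℤ) = k := by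
        simp; omega
      rw [hak] at this
      exact (mul_eq_zero.mp this).resolve_left (one_div_ne_zero hΔx.ne')
    exact Subtype.ext hz
  haveI : FiniteDimensional ℝ (Polynomial.degreeLT ℝ (N + 1)) :=
    (Polynomial.degreeLTEquiv ℝ (N + 1)).symm.finiteDimensional
  have hsurj : Function.Surjective (enoT Δx a N) := by
    rw [← LinearMap.injective_iff_surjective_of_finrank_eq_finrank
      (by rw [(Polynomial.degreeLTEquiv ℝ (N + 1)).finrank_eq])]
    exact hinj
  obtain ⟨p, hp⟩ := hsurj (fun i => f (a + (i : ℕ)))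
  refine ⟨(p : Polynomial ℝ), ⟨(hmem _).mp p.2, ?_⟩, ?_⟩
  · intro k hk1 hk2
    have hi : (k - a).toNat < N + 1 := by omega
    have := congrFun hp ⟨(k - a).toNat, hi⟩
    simp only [enoT, LinearMap.coe_mk, AddHom.coe_mk] at this
    have hak : (a + ((⟨(k - a).toNat, hi⟩ : Fin (N + 1)) : ℕ) : ℤ) = k := by
      simp; omega
    rw [hak] at this
    exact this
  · intro Q hQ
    have hsub : Q - (p : Polynomial ℝ) = 0 := by
      apply eno_avg_zero Δx hΔx a N _ (le_trans (Polynomial.degree_sub_le _ _)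
        (max_le hQ.1 ((hmem _).mp p.2)))
      intro k hk1 hk2
      have hk2' : k ≤ j + n := by omega
      have h1 := hQ.2 k hk1 hk2'
      have h2 : (1 / Δx) * ∫ x in ((k : ℝ) * Δx - Δx / 2)..((k : ℝ) * Δx + Δx / 2),
          (p : Polynomial ℝ).eval x = f k := by
        have hi : (k - a).toNat < N + 1 := by omega
        have := congrFun hp ⟨(k - a).toNat, hi⟩
        simp only [enoT, LinearMap.coe_mk, AddHom.coe_mk] at this
        have hak : (a + ((⟨(k - a).toNat, hi⟩ : Fin (N + 1)) : ℕ) : ℤ) = k := by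
          simp; omega
        rw [hak] at this
        exact this
      simp only [Polynomial.eval_sub]
      rw [intervalIntegral.integral_sub (poly_intInt _ _ _) (poly_intInt _ _ _)]
      have hΔx' : (1 : ℝ) / Δx ≠ 0 := by positivity
      have : (∫ x in ((k : ℝ) * Δx - Δx / 2)..((k : ℝ) * Δx + Δx / 2), Q.eval x)
          = ∫ x in ((k : ℝ) * Δx - Δx / 2)..((k : ℝ) * Δx + Δx / 2),
            (p : Polynomial ℝ).eval x := by
        apply mul_left_cancel₀ hΔx'
        rw [h1, h2]
      rw [this, sub_self]
    exact sub_eq_zero.mp hsub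
end

section
/- Let Δx > 0, let j ∈ ℤ, let n ≥ 0, let f_j, …, f_{j+n+1} be real numbers, and let P be the unique polynomial of degree at most n whose cell averages over I_j, …, I_{j+n} equal f_j, …, f_{j+n}. Then the extrapolated discrepancy on the next cell to the right satisfies (1/Δx)∫_{I_{j+n+1}} P(x) dx − f_{j+n+1} = −∑_{i=0}^{n+1} (−1)^i · C(n+1, i) · f_{j+n+1−i}; in particular |(1/Δx)∫_{I_{j+n+1}} P(x) dx − f_{j+n+1}| equals the absolute value of the (n+1)-th order forward finite difference |∑_{i=0}^{n+1} (−1)^{n+1−i} C(n+1, i) f_{j+i}|. -/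
open Polynomial Finset fwdDiff

lemma coeff_taylor_high (p : ℝ[X]) (r : ℝ) (k : ℕ) (h : p.degree ≤ k) :
    (Polynomial.taylor r p).coeff k = p.coeff k := by
  rw [Polynomial.taylor_coeff]
  have hC : Polynomial.hasseDeriv k p = Polynomial.C (p.coeff k) := by
    ext n
    rw [Polynomial.hasseDeriv_coeff, Polynomial.coeff_C]
    cases n with
    | zero => simp
    | succ m =>
      have : p.coeff (m + 1 + k) = 0 := by
        apply Polynomial.coeff_eq_zero_of_degree_lt
        refine lt_of_le_of_lt h ?_
        exact_mod_cast (by omega : k < m + 1 + k)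
      simp [this]
  rw [hC, Polynomial.eval_C]

lemma degree_taylor_sub (p : ℝ[X]) (r : ℝ) (n : ℕ) (h : p.degree ≤ (n + 1 : ℕ)) :
    (Polynomial.taylor r p - p).degree ≤ (n : ℕ) := by
  rw [Polynomial.degree_le_iff_coeff_zero]
  intro m hm
  have hm' : (n : ℕ) < m := by exact_mod_cast hm
  have hpm : p.degree ≤ (m : ℕ) := h.trans (by exact_mod_cast hm')
  rw [Polynomial.coeff_sub, coeff_taylor_high p r m hpm, sub_self]

lemma fwdDiff_cellavg (p : ℝ[X]) (h c : ℝ) :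
    Δ_[h] (fun t => ∫ x in (t - c)..(t + c), p.eval x)
      = fun t => ∫ x in (t - c)..(t + c), (Polynomial.taylor h p - p).eval x := by
  funext t
  have h1 : (∫ x in (t + h - c)..(t + h + c), p.eval x)
      = ∫ x in (t - c)..(t + c), (Polynomial.taylor h p).eval x := by
    have := intervalIntegral.integral_comp_add_right (a := t - c) (b := t + c)
      (fun x => p.eval x) h
    rw [show t - c + h = t + h - c by ring, show t + c + h = t + h + c by ring] at this
    rw [← this]
    simp [Polynomial.taylor_eval]
  show (∫ x in (t + h - c)..(t + h + c), p.eval x) - _ = _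
  rw [h1, ← intervalIntegral.integral_sub
    ((Polynomial.continuous _).intervalIntegrable _ _)
    ((Polynomial.continuous _).intervalIntegrable _ _)]
  simp

lemma fwdDiff_iter_cellavg_zero (n : ℕ) (p : ℝ[X]) (hp : p.degree ≤ (n : ℕ)) (h c : ℝ) :
    (Δ_[h])^[n + 1] (fun t => ∫ x in (t - c)..(t + c), p.eval x) = 0 := by
  induction n generalizing p with
  | zero =>
    have h0 : Polynomial.taylor h p - p = 0 := by
      rw [Polynomial.eq_C_of_degree_le_zero hp, Polynomial.taylor_C, sub_self]
    rw [Function.iterate_one, fwdDiff_cellavg, h0]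
    funext t; simp
  | succ n IH =>
    rw [Function.iterate_succ_apply, fwdDiff_cellavg]
    exact IH _ (degree_taylor_sub p h n hp)

/-- The extrapolated discrepancy of the reconstruction polynomial on the next cell to
the right equals (minus) an `(n+1)`-th order finite difference of the data; in
particular its absolute value equals the absolute value of the `(n+1)`-th order
forward finite difference. -/
theorem eno_ao_right_discrepancy
    (Δx : ℝ) (hΔx : 0 < Δx) (j : ℤ) (n : ℕ) (f : ℤ → ℝ)
    (P : Polynomial ℝ) (hdeg : P.degree ≤ (n : ℕ))
    (havg : ∀ i : ℕ, i ≤ n →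
      (1 / Δx) * ∫ x in (((j : ℝ) + i) * Δx - Δx / 2)..(((j : ℝ) + i) * Δx + Δx / 2),
        P.eval x = f (j + i)) :
    ((1 / Δx) * ∫ x in (((j : ℝ) + (n + 1)) * Δx - Δx / 2)..(((j : ℝ) + (n + 1)) * Δx + Δx / 2),
        P.eval x) - f (j + n + 1)
      = -∑ i ∈ Finset.range (n + 2),
          (-1 : ℝ) ^ i * ((n + 1).choose i : ℝ) * f (j + n + 1 - i) ∧
    |((1 / Δx) * ∫ x in (((j : ℝ) + (n + 1)) * Δx - Δx / 2)..(((j : ℝ) + (n + 1)) * Δx + Δx / 2),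
        P.eval x) - f (j + n + 1)|
      = |∑ i ∈ Finset.range (n + 2),
          (-1 : ℝ) ^ (n + 1 - i) * ((n + 1).choose i : ℝ) * f (j + i)| := by
  set A : ℝ → ℝ := fun t => ∫ x in (t - Δx / 2)..(t + Δx / 2), P.eval x with hA
  -- the fwdDiff identity
  have hzero := fwdDiff_iter_eq_sum_shift Δx A (n + 1) ((j : ℝ) * Δx)
  rw [fwdDiff_iter_cellavg_zero n P hdeg Δx (Δx / 2)] at hzero
  -- rewrite shifted points
  have hpt : ∀ k : ℕ, (j : ℝ) * Δx + k • Δx = ((j : ℝ) + k) * Δx - Δx / 2 + Δx / 2 := by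
    intro k; rw [nsmul_eq_mul]; ring
  have hsum : (0 : ℝ) = ∑ k ∈ Finset.range (n + 2),
      ((-1 : ℝ) ^ (n + 1 - k) * ((n + 1).choose k : ℝ)) *
        (∫ x in (((j : ℝ) + k) * Δx - Δx / 2)..(((j : ℝ) + k) * Δx + Δx / 2), P.eval x) := by
    rw [show ((0:ℝ→ℝ) ((j:ℝ)*Δx)) = (0:ℝ) from rfl] at hzero
    rw [hzero]
    refine Finset.sum_congr rfl fun k _ => ?_
    have : A ((j : ℝ) * Δx + k • Δx)
        = ∫ x in (((j : ℝ) + k) * Δx - Δx / 2)..(((j : ℝ) + k) * Δx + Δx / 2), P.eval x := by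
      rw [hA]
      simp only []
      rw [hpt k]
      congr 1 <;> ring
    rw [this, zsmul_eq_mul]
    push_cast
    ring
  -- abbreviations
  set I : ℝ := ∫ x in (((j : ℝ) + (n + 1)) * Δx - Δx / 2)..(((j : ℝ) + (n + 1)) * Δx + Δx / 2),
      P.eval x with hI
  have hIval : ∀ k : ℕ, k ≤ n →
      (∫ x in (((j : ℝ) + k) * Δx - Δx / 2)..(((j : ℝ) + k) * Δx + Δx / 2), P.eval x)
        = Δx * f (j + k) := by
    intro k hk
    have hx : ∀ X : ℝ, Δx * (1 / Δx * X) = X := fun X => by field_simp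
    rw [← havg k hk, hx]
  rw [Finset.sum_range_succ] at hsum
  simp only [Nat.sub_self, pow_zero, Nat.choose_self, Nat.cast_one, one_mul, mul_one] at hsum
  push_cast at hsum
  rw [← hI] at hsum
  have hImain : I = -∑ k ∈ Finset.range (n + 1),
      ((-1 : ℝ) ^ (n + 1 - k) * ((n + 1).choose k : ℝ)) * (Δx * f (j + k)) := by
    have : ∑ k ∈ Finset.range (n + 1),
        ((-1 : ℝ) ^ (n + 1 - k) * ((n + 1).choose k : ℝ)) *
          (∫ x in (((j : ℝ) + k) * Δx - Δx / 2)..(((j : ℝ) + k) * Δx + Δx / 2), P.eval x)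
        = ∑ k ∈ Finset.range (n + 1),
        ((-1 : ℝ) ^ (n + 1 - k) * ((n + 1).choose k : ℝ)) * (Δx * f (j + k)) := by
      refine Finset.sum_congr rfl fun k hk => ?_
      rw [hIval k (Nat.lt_succ_iff.mp (Finset.mem_range.mp hk))]
    linarith [hsum, this]
  -- key identity
  have key : (1 / Δx) * I - f (j + n + 1)
      = -∑ k ∈ Finset.range (n + 2),
          (-1 : ℝ) ^ (n + 1 - k) * ((n + 1).choose k : ℝ) * f (j + k) := by
    have hc : ∀ k : ℕ, (1 / Δx) * ((-1 : ℝ) ^ (n + 1 - k) * ((n + 1).choose k : ℝ)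
        * (Δx * f (j + k))) = (-1 : ℝ) ^ (n + 1 - k) * ((n + 1).choose k : ℝ) * f (j + k) := by
      intro k; field_simp
    have harg : (j + ((n + 1 : ℕ) : ℤ)) = j + (n : ℤ) + 1 := by push_cast; ring
    rw [Finset.sum_range_succ, harg]
    simp only [Nat.sub_self, pow_zero, Nat.choose_self, Nat.cast_one, one_mul]
    rw [hImain, mul_neg, Finset.mul_sum, Finset.sum_congr rfl fun k _ => hc k]
    ring
  -- reindexing identity
  have reflect : ∑ i ∈ Finset.range (n + 2),
      (-1 : ℝ) ^ i * ((n + 1).choose i : ℝ) * f (j + n + 1 - i)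
      = ∑ i ∈ Finset.range (n + 2),
      (-1 : ℝ) ^ (n + 1 - i) * ((n + 1).choose i : ℝ) * f (j + i) := by
    rw [← Finset.sum_range_reflect]
    refine Finset.sum_congr rfl fun i hi => ?_
    have hi' : i ≤ n + 1 := Nat.lt_succ_iff.mp (Finset.mem_range.mp hi)
    rw [show n + 2 - 1 - i = n + 1 - i from by omega, Nat.choose_symm hi']
    have harg : (j + (n : ℤ) + 1 - ((n + 1 - i : ℕ) : ℤ)) = j + i := by
      rw [Nat.cast_sub hi']; push_cast; ring
    rw [harg]
  constructor
  · rw [key, reflect]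
  · rw [key, abs_neg]
end

section
/- Let Δx > 0, let j ∈ ℤ, let n ≥ 0, let f_{j-1}, f_j, …, f_{j+n} be real numbers, and let P be the unique polynomial of degree at most n whose cell averages over I_j, …, I_{j+n} equal f_j, …, f_{j+n}. Then the extrapolated discrepancy on the next cell to the left satisfies |(1/Δx)∫_{I_{j-1}} P(x) dx − f_{j-1}| = |∑_{i=0}^{n+1} (−1)^i · C(n+1, i) · f_{j−1+i}|, i.e., it equals the absolute value of the (n+1)-th order finite difference of the data f_{j-1}, …, f_{j+n}. -/
open Polynomial Finset

private lemma wb_le_of_lt_succ {p : Polynomial ℝ} {m : ℕ}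
    (h : p.degree < ((m + 1 : ℕ) : WithBot ℕ)) : p.degree ≤ (m : ℕ) := by
  cases hd : p.degree with
  | bot => exact bot_le
  | coe k =>
      rw [hd, Nat.cast_withBot] at h
      rw [Nat.cast_withBot]
      exact WithBot.coe_le_coe.mpr (Nat.lt_succ_iff.mp (WithBot.coe_lt_coe.mp h))

/-- degree of `(aX+c)^(m+1) - (aX-c)^(m+1)` is at most `m` when `a ≠ 0`. -/
private lemma deg_pow_diff (a c : ℝ) (ha : a ≠ 0) (m : ℕ) :
    (((C a * X + C c) ^ (m + 1)) - ((C a * X - C c) ^ (m + 1))).degree ≤ ((m : ℕ) : WithBot ℕ) := by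
  have hq : C a * X - C c = C a * X + C (-c) := by rw [map_neg]; ring
  set p := (C a * X + C c) ^ (m + 1) with hp
  set q := (C a * X + C (-c)) ^ (m + 1) with hqq
  have hdp : p.degree = ((m + 1 : ℕ) : WithBot ℕ) := by
    rw [hp, degree_pow, degree_linear ha]; simp
  have hdq : q.degree = ((m + 1 : ℕ) : WithBot ℕ) := by
    rw [hqq, degree_pow, degree_linear ha]; simp
  have hp0 : p ≠ 0 := leadingCoeff_ne_zero.mp
    (by rw [hp, leadingCoeff_pow, leadingCoeff_linear ha]; exact pow_ne_zero _ ha)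
  have hlc : p.leadingCoeff = q.leadingCoeff := by
    rw [hp, hqq, leadingCoeff_pow, leadingCoeff_pow, leadingCoeff_linear ha,
      leadingCoeff_linear ha]
  have := degree_sub_lt (hdp.trans hdq.symm) hp0 hlc
  rw [hdp] at this
  rw [hq]
  exact wb_le_of_lt_succ this

/-- `(n+1)`-st forward difference annihilates polynomials of degree ≤ n. -/
private lemma fwd_kill : ∀ (n : ℕ) (Q : Polynomial ℝ), Q.degree ≤ (n : ℕ) →
    (fwdDiff (1 : ℝ))^[n + 1] (fun t : ℝ => Q.eval t) = fun _ => 0 := by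
  intro n
  induction n with
  | zero =>
      intro Q hQ
      obtain ⟨a, rfl⟩ : ∃ a, Q = C a := ⟨Q.coeff 0, eq_C_of_degree_le_zero (by exact_mod_cast hQ)⟩
      funext y
      simp [fwdDiff]
  | succ n ih =>
      intro Q hQ
      have hstep : fwdDiff (1 : ℝ) (fun t : ℝ => Q.eval t)
          = fun t : ℝ => (Q.comp (X + C 1) - Q).eval t := by
        funext y
        simp [fwdDiff, eval_comp]
      rw [Function.iterate_succ_apply, hstep]
      apply ih
      -- degree (Q.comp (X + C 1) - Q) ≤ n
      by_cases h0 : Q.degree ≤ 0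
      · obtain ⟨a, rfl⟩ : ∃ a, Q = C a := ⟨Q.coeff 0, eq_C_of_degree_le_zero h0⟩
        simp
      · have hQ0 : Q ≠ 0 := fun h => h0 (by simp [h])
        have hnd : Q.natDegree ≠ 0 := by
          intro h
          exact h0 (degree_le_zero_iff.mpr (eq_C_of_natDegree_eq_zero h))
        have hcompnd : (Q.comp (X + C 1)).natDegree = Q.natDegree := by
          rw [natDegree_comp, natDegree_X_add_C, mul_one]
        have hlc : (Q.comp (X + C 1)).leadingCoeff = Q.leadingCoeff := by
          rw [leadingCoeff_comp (by rw [natDegree_X_add_C]; exact one_ne_zero),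
            (monic_X_add_C (1 : ℝ)).leadingCoeff, one_pow, mul_one]
        have hcomp0 : Q.comp (X + C 1) ≠ 0 := fun h =>
          hQ0 (leadingCoeff_eq_zero.mp (by rw [← hlc, h, leadingCoeff_zero]))
        have hdeg : (Q.comp (X + C 1)).degree = Q.degree := by
          rw [degree_eq_natDegree hcomp0, degree_eq_natDegree hQ0, hcompnd]
        have hlt := degree_sub_lt hdeg hcomp0 hlc
        rw [hdeg] at hlt
        exact wb_le_of_lt_succ (lt_of_lt_of_le hlt hQ)

/-- The polynomial whose value at `y` is the cell average of `P` on the cell centered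
at `y * Δx`. -/
private noncomputable def avgPoly (Δx : ℝ) (P : Polynomial ℝ) : Polynomial ℝ :=
  ∑ m ∈ range (P.natDegree + 1),
    C (P.coeff m / ((m + 1) * Δx)) *
      ((C Δx * X + C (Δx / 2)) ^ (m + 1) - (C Δx * X - C (Δx / 2)) ^ (m + 1))

private lemma avgPoly_degree (Δx : ℝ) (hΔx : Δx ≠ 0) (P : Polynomial ℝ) (n : ℕ)
    (h : P.degree ≤ (n : ℕ)) : (avgPoly Δx P).degree ≤ (n : ℕ) := by
  apply (degree_sum_le _ _).trans
  apply Finset.sup_le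
  intro m hm
  have hmn : m ≤ n := le_trans (Nat.lt_succ_iff.mp (mem_range.mp hm))
    (natDegree_le_iff_degree_le.mpr h)
  calc (C (P.coeff m / ((m + 1) * Δx)) *
      ((C Δx * X + C (Δx / 2)) ^ (m + 1) - (C Δx * X - C (Δx / 2)) ^ (m + 1))).degree
      ≤ 0 + ((m : ℕ) : WithBot ℕ) :=
        degree_mul_le_of_le degree_C_le (deg_pow_diff Δx (Δx / 2) hΔx m)
    _ ≤ ((n : ℕ) : WithBot ℕ) := by rw [zero_add]; exact_mod_cast hmn

private lemma avgPoly_eval (Δx : ℝ) (hΔx : 0 < Δx) (P : Polynomial ℝ) (y : ℝ) :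
    (avgPoly Δx P).eval y
      = (1 / Δx) * ∫ x in (y * Δx - Δx / 2)..(y * Δx + Δx / 2), P.eval x := by
  have hint : (∫ x in (y * Δx - Δx / 2)..(y * Δx + Δx / 2), P.eval x)
      = ∑ m ∈ range (P.natDegree + 1),
          P.coeff m * (((y * Δx + Δx / 2) ^ (m + 1) - (y * Δx - Δx / 2) ^ (m + 1)) / (m + 1)) := by
    rw [show (fun x => P.eval x) = fun x => ∑ m ∈ range (P.natDegree + 1), P.coeff m * x ^ m
      from funext fun x => P.eval_eq_sum_range x]
    rw [intervalIntegral.integral_finset_sum (f := fun m x => P.coeff m * x ^ m) (fun m _ =>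
      ((continuous_const.mul (continuous_pow m) : Continuous fun x : ℝ => P.coeff m * x ^ m).intervalIntegrable _ _))]
    refine Finset.sum_congr rfl fun m _ => ?_
    rw [intervalIntegral.integral_const_mul, integral_pow]
  rw [hint, avgPoly, eval_finset_sum, Finset.mul_sum]
  refine Finset.sum_congr rfl fun m _ => ?_
  have hm1 : ((m : ℝ) + 1) ≠ 0 := by positivity
  simp only [eval_mul, eval_C, eval_sub, eval_pow, eval_add, eval_X]
  field_simp

/-- The extrapolated discrepancy of the reconstruction polynomial on the next cell to
the left has absolute value equal to the absolute value of the `(n+1)`-th order finite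
difference of the data `f_{j-1}, …, f_{j+n}`. -/
theorem eno_ao_left_discrepancy
    (Δx : ℝ) (hΔx : 0 < Δx) (j : ℤ) (n : ℕ) (f : ℤ → ℝ)
    (P : Polynomial ℝ) (hdeg : P.degree ≤ (n : ℕ))
    (havg : ∀ i : ℕ, i ≤ n →
      (1 / Δx) * ∫ x in (((j : ℝ) + i) * Δx - Δx / 2)..(((j : ℝ) + i) * Δx + Δx / 2),
        P.eval x = f (j + i)) :
    |((1 / Δx) * ∫ x in (((j : ℝ) - 1) * Δx - Δx / 2)..(((j : ℝ) - 1) * Δx + Δx / 2),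
        P.eval x) - f (j - 1)|
      = |∑ i ∈ Finset.range (n + 2),
          (-1 : ℝ) ^ i * ((n + 1).choose i : ℝ) * f (j - 1 + i)| := by
  set R := avgPoly Δx P with hR
  have hRdeg : R.degree ≤ (n : ℕ) := avgPoly_degree Δx hΔx.ne' P n hdeg
  -- values of R at shifted points
  have hRval : ∀ k : ℕ, 1 ≤ k → k ≤ n + 1 → R.eval ((j : ℝ) - 1 + k) = f (j - 1 + k) := by
    intro k hk1 hk2
    obtain ⟨i, rfl⟩ : ∃ i : ℕ, k = i + 1 := ⟨k - 1, (Nat.succ_pred_eq_of_pos hk1).symm⟩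
    have hi : i ≤ n := by omega
    have := havg i hi
    have harg : (j : ℝ) - 1 + (i + 1 : ℕ) = (j : ℝ) + i := by push_cast; ring
    have hidx : j - 1 + ((i : ℤ) + 1) = j + i := by ring
    rw [avgPoly_eval Δx hΔx P, harg, this]
    norm_num [hidx]
  -- forward difference vanishes
  have hkill := congrFun (fwd_kill n R hRdeg) ((j : ℝ) - 1)
  rw [fwdDiff_iter_eq_sum_shift] at hkill
  -- turn into a real sum with sign (-1)^k
  have hsum : ∑ k ∈ range (n + 2), (-1 : ℝ) ^ k * ((n + 1).choose k : ℝ)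
      * R.eval ((j : ℝ) - 1 + k) = 0 := by
    have := congrArg (fun t => ((-1 : ℝ) ^ (n + 1)) * t) hkill
    simp only [mul_zero] at this
    rw [← this, Finset.mul_sum]
    refine Finset.sum_congr rfl fun k hk => ?_
    have hkle : k ≤ n + 1 := Nat.lt_succ_iff.mp (mem_range.mp hk)
    have hsign : (-1 : ℝ) ^ (n + 1 - k) * (-1 : ℝ) ^ k = (-1 : ℝ) ^ (n + 1) := by
      rw [← pow_add, Nat.sub_add_cancel hkle]
    have hsign' : (-1 : ℝ) ^ (n + 1) * (-1 : ℝ) ^ (n + 1 - k) = (-1 : ℝ) ^ k := by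
      have h2 : ((-1 : ℝ) ^ k) ^ 2 = 1 := by
        rw [← pow_mul, mul_comm, pow_mul]; norm_num
      calc (-1 : ℝ) ^ (n + 1) * (-1 : ℝ) ^ (n + 1 - k)
          = ((-1 : ℝ) ^ (n + 1 - k) * (-1 : ℝ) ^ k) * (-1 : ℝ) ^ (n + 1 - k) := by
            rw [hsign]
        _ = (-1 : ℝ) ^ k * (((-1 : ℝ) ^ (n + 1 - k)) * (-1 : ℝ) ^ (n + 1 - k)) := by ring
        _ = (-1 : ℝ) ^ k * ((-1 : ℝ) ^ ((n + 1 - k) + (n + 1 - k))) := by rw [pow_add]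
        _ = (-1 : ℝ) ^ k := by
            rw [← two_mul, pow_mul]; norm_num
    simp only [zsmul_eq_mul, nsmul_eq_mul, mul_one, Int.cast_mul, Int.cast_pow,
      Int.cast_neg, Int.cast_one, Int.cast_natCast]
    linear_combination (-((((n + 1).choose k : ℝ)) * R.eval ((j : ℝ) - 1 + (k : ℝ)))) * hsign'
  -- identify the data sum
  have hS : (∑ i ∈ Finset.range (n + 2),
      (-1 : ℝ) ^ i * ((n + 1).choose i : ℝ) * f (j - 1 + i))
      = f (j - 1) - R.eval ((j : ℝ) - 1) := by
    rw [← sub_zero (∑ i ∈ Finset.range (n + 2),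
      (-1 : ℝ) ^ i * ((n + 1).choose i : ℝ) * f (j - 1 + i)), ← hsum,
      ← Finset.sum_sub_distrib]
    refine (Finset.sum_eq_single 0 ?_ ?_).trans ?_
    · intro i hi hi0
      have h1 : 1 ≤ i := Nat.one_le_iff_ne_zero.mpr hi0
      have h2 : i ≤ n + 1 := Nat.lt_succ_iff.mp (mem_range.mp hi)
      rw [hRval i h1 h2]
      ring
    · intro h
      exact absurd (mem_range.mpr (by omega)) h
    · simp
  have hL : (1 / Δx) * (∫ x in (((j : ℝ) - 1) * Δx - Δx / 2)..(((j : ℝ) - 1) * Δx + Δx / 2),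
      P.eval x) = R.eval ((j : ℝ) - 1) := (avgPoly_eval Δx hΔx P ((j : ℝ) - 1)).symm
  rw [hL, hS, abs_sub_comm]
end

section
/- Let Δx > 0, let j ∈ ℤ, and let f_{j-3}, …, f_{j+3} be real numbers. If P is the unique polynomial of degree at most 6 whose cell averages over I_{j-3}, …, I_{j+3} equal the given data, then P(x_j + Δx/2) = (−3 f_{j-3} + 25 f_{j-2} − 101 f_{j-1} + 319 f_j + 214 f_{j+1} − 38 f_{j+2} + 4 f_{j+3})/420. -/
/-- Right-interface value of the reconstruction polynomial on the stencil
`S_{j+((-3))}^{j+(3)}`. -/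
theorem flux_S_jm3_jp3
    (Δx : ℝ) (hΔx : 0 < Δx) (j : ℤ) (f : ℤ → ℝ)
    (P : Polynomial ℝ) (hdeg : P.degree ≤ (6 : ℕ))
    (havg : ∀ k : ℤ, j + ((-3)) ≤ k → k ≤ j + (3) →
      (1 / Δx) * ∫ x in ((k : ℝ) * Δx - Δx / 2)..((k : ℝ) * Δx + Δx / 2), P.eval x
        = f k) :
    P.eval ((j : ℝ) * Δx + Δx / 2) = (-3 * f (j - 3) + 25 * f (j - 2) - 101 * f (j - 1) + 319 * f j + 214 * f (j + 1) - 38 * f (j + 2) + 4 * f (j + 3)) / 420 := by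
  have hΔ : Δx ≠ 0 := ne_of_gt hΔx
  have hnat : P.natDegree < 7 := by
    have := Polynomial.natDegree_le_iff_degree_le.mpr hdeg
    omega
  have heval : ∀ x : ℝ, P.eval x = ∑ i ∈ Finset.range 7, P.coeff i * x ^ i := fun x =>
    Polynomial.eval_eq_sum_range' hnat x
  have hint : ∀ a b : ℝ, (∫ x in a..b, P.eval x)
      = ∑ i ∈ Finset.range 7, P.coeff i * ((b ^ (i+1) - a ^ (i+1)) / (i+1)) := by
    intro a b
    rw [intervalIntegral.integral_congr (g := fun x => ∑ i ∈ Finset.range 7, P.coeff i * x ^ i)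
      (fun x _ => heval x)]
    rw [intervalIntegral.integral_finset_sum]
    · refine Finset.sum_congr rfl fun i _ => ?_
      rw [intervalIntegral.integral_const_mul, integral_pow]
    · intro i _
      exact (continuous_const.mul (continuous_pow i)).intervalIntegrable a b
  have key : ∀ k : ℤ, j + (-3) ≤ k → k ≤ j + 3 →
      (∑ i ∈ Finset.range 7, P.coeff i *
        ((((k:ℝ) * Δx + Δx / 2) ^ (i+1) - ((k:ℝ) * Δx - Δx / 2) ^ (i+1)) / (i+1)))
        = f k * Δx := by
    intro k h1 h2
    have h := havg k h1 h2
    rw [hint, one_div, inv_mul_eq_div, div_eq_iff hΔ] at h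
    exact h
  have e0 := key (j - 3) (by omega) (by omega)
  have e1 := key (j - 2) (by omega) (by omega)
  have e2 := key (j - 1) (by omega) (by omega)
  have e3 := key j (by omega) (by omega)
  have e4 := key (j + 1) (by omega) (by omega)
  have e5 := key (j + 2) (by omega) (by omega)
  have e6 := key (j + 3) (by omega) (by omega)
  simp only [Finset.sum_range_succ, Finset.sum_range_zero] at e0 e1 e2 e3 e4 e5 e6
  push_cast at e0 e1 e2 e3 e4 e5 e6
  rw [heval]
  simp only [Finset.sum_range_succ, Finset.sum_range_zero]
  refine mul_right_cancel₀ hΔ ?_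
  linear_combination (-3/420) * e0 + (25/420) * e1 + (-101/420) * e2 + (319/420) * e3
    + (214/420) * e4 + (-38/420) * e5 + (4/420) * e6
end

section
/- For every real κ, −5/6 + (5/4)·cos κ − (1/2)·cos 2κ + (1/12)·cos 3κ ≤ 0; that is, the imaginary part of the modified wavenumber of the fourth-order scheme on the stencil S_{j-2}^{j+1} is nonpositive for all wavenumbers, so this scheme is linearly stable. -/
/-- Linear stability of the fourth-order scheme on `S_{j-2}^{j+1}`: the imaginary part of its modified wavenumber is nonpositive for all wavenumbers. -/
theorem linear_stability_S_jm2_jp1 (κ : ℝ) :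
    -5 / 6 + (5 / 4) * Real.cos κ - (1 / 2) * Real.cos (2 * κ) + (1 / 12) * Real.cos (3 * κ) ≤ 0 := by
  have h2 : Real.cos (2 * κ) = 2 * Real.cos κ ^ 2 - 1 := Real.cos_two_mul κ
  have h3 : Real.cos (3 * κ) = 4 * Real.cos κ ^ 3 - 3 * Real.cos κ := Real.cos_three_mul κ
  have hle : Real.cos κ ≤ 1 := Real.cos_le_one κ
  nlinarith [sq_nonneg (Real.cos κ - 1), sq_nonneg (Real.cos κ + 1)]
end

section
/- For every real κ, −1/3 + (1/2)·cos κ − (1/5)·cos 2κ + (1/30)·cos 3κ ≤ 0; that is, the imaginary part of the modified wavenumber of the fifth-order central scheme on the stencil S_{j-2}^{j+2} is nonpositive for all wavenumbers, so this scheme is linearly stable. -/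
/-- Linear stability of the fifth-order central scheme on `S_{j-2}^{j+2}`: the imaginary part of its modified wavenumber is nonpositive for all wavenumbers. -/
theorem linear_stability_S_jm2_jp2 (κ : ℝ) :
    -1 / 3 + (1 / 2) * Real.cos κ - (1 / 5) * Real.cos (2 * κ) + (1 / 30) * Real.cos (3 * κ) ≤ 0 := by
  have h2 : Real.cos (2 * κ) = 2 * Real.cos κ ^ 2 - 1 := Real.cos_two_mul κ
  have h3 : Real.cos (3 * κ) = 4 * Real.cos κ ^ 3 - 3 * Real.cos κ := Real.cos_three_mul κ
  have hc : Real.cos κ ≤ 1 := Real.cos_le_one κ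
  nlinarith [sq_nonneg (Real.cos κ - 1), mul_nonneg (sq_nonneg (Real.cos κ - 1)) (sub_nonneg.mpr hc)]
end

section
/- For every real κ, −7/12 + (14/15)·cos κ − (7/15)·cos 2κ + (2/15)·cos 3κ − (1/60)·cos 4κ ≤ 0; that is, the imaginary part of the modified wavenumber of the sixth-order scheme on the stencil S_{j-3}^{j+2} is nonpositive for all wavenumbers, so this scheme is linearly stable. -/
/-- Linear stability of the sixth-order scheme on `S_{j-3}^{j+2}`: the imaginary part of its modified wavenumber is nonpositive for all wavenumbers. -/
theorem linear_stability_S_jm3_jp2 (κ : ℝ) :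
    -7 / 12 + (14 / 15) * Real.cos κ - (7 / 15) * Real.cos (2 * κ) + (2 / 15) * Real.cos (3 * κ) - (1 / 60) * Real.cos (4 * κ) ≤ 0 := by
  have h2 : Real.cos (2 * κ) = 2 * Real.cos κ ^ 2 - 1 := Real.cos_two_mul κ
  have h3 : Real.cos (3 * κ) = 4 * Real.cos κ ^ 3 - 3 * Real.cos κ := Real.cos_three_mul κ
  have h4 : Real.cos (4 * κ) = 2 * Real.cos (2 * κ) ^ 2 - 1 := by
    rw [show (4 : ℝ) * κ = 2 * (2 * κ) by ring, Real.cos_two_mul]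
  rw [h4, h2, h3]
  nlinarith [sq_nonneg ((Real.cos κ - 1) ^ 2), sq_nonneg (Real.cos κ - 1)]
end

section
/- For every real κ, −1/4 + (2/5)·cos κ − (1/5)·cos 2κ + (2/35)·cos 3κ − (1/140)·cos 4κ ≤ 0; that is, the imaginary part of the modified wavenumber of the seventh-order central scheme on the stencil S_{j-3}^{j+3} is nonpositive for all wavenumbers, so this scheme is linearly stable. -/
/-- Linear stability of the seventh-order central scheme on `S_{j-3}^{j+3}`: the imaginary part of its modified wavenumber is nonpositive for all wavenumbers. -/
theorem linear_stability_S_jm3_jp3 (κ : ℝ) :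
    -1 / 4 + (2 / 5) * Real.cos κ - (1 / 5) * Real.cos (2 * κ) + (2 / 35) * Real.cos (3 * κ) - (1 / 140) * Real.cos (4 * κ) ≤ 0 := by
  have h2 : Real.cos (2 * κ) = 2 * Real.cos κ ^ 2 - 1 := Real.cos_two_mul κ
  have h3 : Real.cos (3 * κ) = 4 * Real.cos κ ^ 3 - 3 * Real.cos κ := Real.cos_three_mul κ
  have h4 : Real.cos (4 * κ) = 2 * Real.cos (2 * κ) ^ 2 - 1 := by
    rw [show (4:ℝ) * κ = 2 * (2 * κ) by ring]; exact Real.cos_two_mul _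
  nlinarith [sq_nonneg ((Real.cos κ - 1) ^ 2), sq_nonneg (Real.cos κ - 1)]
end

section
/- Let n ≥ 0, let Δx > 0, let j ∈ ℤ, and let h : ℝ → ℝ be (n+1)-times continuously differentiable on an interval containing the cells I_j, …, I_{j+n+1}, with |h^{(n+1)}(ξ)| ≤ M on that interval. If f_k = (1/Δx)∫_{I_k} h(x) dx are the exact cell averages of h, then the (n+1)-th order finite difference of the cell averages satisfies |∑_{i=0}^{n+1} (−1)^{n+1−i} C(n+1, i) f_{j+i}| ≤ M·Δx^{n+1}. In particular, the smoothness indicator of the ENO-AO scheme on a stencil of n+1 cells where h is C^{n+1} is of order O(Δx^{n+1}). -/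
open Finset Set intervalIntegral
open scoped fwdDiff

lemma fwdDiff_iter_eq_sum_real (Δx : ℝ) (g : ℝ → ℝ) (m : ℕ) (y : ℝ) :
    (fwdDiff Δx)^[m] g y
      = ∑ k ∈ Finset.range (m + 1), (-1 : ℝ) ^ (m - k) * (m.choose k : ℝ) * g (y + k * Δx) := by
  rw [fwdDiff_iter_eq_sum_shift]
  refine Finset.sum_congr rfl fun k _ => ?_
  push_cast [zsmul_eq_mul, nsmul_eq_mul]
  ring

lemma key (Δx : ℝ) (hΔx : 0 < Δx) (a b : ℝ) :
    ∀ (m : ℕ) (g : ℝ → ℝ) (M : ℝ),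
      ContDiffOn ℝ m g (Set.Icc a b) →
      (∀ ξ ∈ Set.Icc a b, |iteratedDerivWithin m g (Set.Icc a b) ξ| ≤ M) →
      ∀ y, a ≤ y → y + m * Δx ≤ b →
        |(fwdDiff Δx)^[m] g y| ≤ M * Δx ^ m := by
  intro m
  induction m with
  | zero =>
    intro g M hg hM y hya hyb
    simp only [Function.iterate_zero, id_eq, pow_zero, mul_one]
    have hy : y ∈ Set.Icc a b := ⟨hya, by simpa using hyb⟩
    simpa using hM y hy
  | succ m IH =>
    intro g M hg hM y hya hyb
    push_cast at hyb
    have hab : a < b := by nlinarith [(Nat.cast_nonneg m : (0:ℝ) ≤ m)]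
    have hud : UniqueDiffOn ℝ (Set.Icc a b) := uniqueDiffOn_Icc hab
    set G := derivWithin g (Set.Icc a b) with hGdef
    have hGc : ContinuousOn G (Set.Icc a b) :=
      hg.continuousOn_derivWithin hud (by exact_mod_cast Nat.one_le_iff_ne_zero.2 (Nat.succ_ne_zero m))
    have hGsm : ContDiffOn ℝ m G (Set.Icc a b) :=
      hg.derivWithin hud (by exact_mod_cast le_refl (m+1))
    have hGM : ∀ ξ ∈ Set.Icc a b, |iteratedDerivWithin m G (Set.Icc a b) ξ| ≤ M := by
      intro ξ hξ
      rw [← iteratedDerivWithin_succ']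
      exact hM ξ hξ
    have hFTC : ∀ z, a ≤ z → z + Δx ≤ b →
        fwdDiff Δx g z = ∫ s in (0:ℝ)..Δx, G (z + s) := by
      intro z hza hzb
      have hsub : Set.Icc z (z + Δx) ⊆ Set.Icc a b := Set.Icc_subset_Icc hza hzb
      have hint : IntervalIntegrable G MeasureTheory.volume z (z + Δx) :=
        (hGc.mono (by rw [Set.uIcc_of_le (by linarith)]; exact hsub)).intervalIntegrable
      have h1 : ∫ t in z..(z + Δx), G t = g (z + Δx) - g z := by
        apply intervalIntegral.integral_eq_sub_of_hasDeriv_right_of_le (by linarith)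
          (hg.continuousOn.mono hsub) ?_ hint
        intro x hx
        have hx' : Set.Icc a b ∈ nhds x :=
          Icc_mem_nhds (by linarith [hx.1]) (by linarith [hx.2])
        have hdiff : DifferentiableWithinAt ℝ g (Set.Icc a b) x :=
          hg.differentiableOn (by simp) x
            ⟨by linarith [hx.1], by linarith [hx.2]⟩
        exact ((hdiff.hasDerivWithinAt).hasDerivAt hx').hasDerivWithinAt
      have h2 : (∫ s in (0:ℝ)..Δx, G (z + s)) = ∫ t in (z + 0)..(z + Δx), G t :=
        intervalIntegral.integral_comp_add_left G z
      rw [show fwdDiff Δx g z = g (z + Δx) - g z from rfl, h2, add_zero, h1]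
    have hcont : ∀ k : ℕ, k ≤ m → ContinuousOn (fun s : ℝ => G (y + s + k * Δx)) (Set.uIcc 0 Δx) := by
      intro k hk
      apply hGc.comp (Continuous.continuousOn (by continuity))
      intro s hs
      rw [Set.uIcc_of_le hΔx.le] at hs
      have hkm : (k : ℝ) ≤ m := by exact_mod_cast hk
      have h0k : (0:ℝ) ≤ k := Nat.cast_nonneg k
      simp only [Set.mem_Icc]
      constructor <;> nlinarith [hs.1, hs.2]
    have expand : (fwdDiff Δx)^[m + 1] g y = ∫ s in (0:ℝ)..Δx,
        ∑ k ∈ Finset.range (m + 1), (-1 : ℝ) ^ (m - k) * (m.choose k : ℝ) * G (y + s + k * Δx) := by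
      rw [Function.iterate_succ_apply, fwdDiff_iter_eq_sum_real]
      rw [intervalIntegral.integral_finset_sum]
      · refine Finset.sum_congr rfl fun k hk => ?_
        have hk' : k ≤ m := Nat.lt_succ_iff.mp (Finset.mem_range.mp hk)
        have hkm : (k : ℝ) ≤ m := by exact_mod_cast hk'
        rw [hFTC (y + k * Δx) (by nlinarith [(Nat.cast_nonneg k : (0:ℝ) ≤ k)]) (by nlinarith)]
        rw [← intervalIntegral.integral_const_mul]
        congr 1
        ext s
        ring_nf
      · intro k hk
        exact (continuousOn_const.mul (hcont k (Nat.lt_succ_iff.mp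
          (Finset.mem_range.mp hk)))).intervalIntegrable
    rw [expand]
    have hb : ∀ s ∈ Set.uIoc (0:ℝ) Δx,
        ‖∑ k ∈ Finset.range (m + 1),
            (-1 : ℝ) ^ (m - k) * (m.choose k : ℝ) * G (y + s + k * Δx)‖ ≤ M * Δx ^ m := by
      intro s hs
      rw [Set.uIoc_of_le hΔx.le] at hs
      have h3 := IH G M hGsm hGM (y + s) (by linarith [hs.1]) (by linarith [hs.2])
      rw [fwdDiff_iter_eq_sum_real] at h3
      simpa [Real.norm_eq_abs, add_assoc] using h3
    calc ‖∫ s in (0:ℝ)..Δx, ∑ k ∈ Finset.range (m + 1),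
            (-1 : ℝ) ^ (m - k) * (m.choose k : ℝ) * G (y + s + k * Δx)‖
        ≤ (M * Δx ^ m) * |Δx - 0| := intervalIntegral.norm_integral_le_of_norm_le_const hb
      _ = M * Δx ^ (m + 1) := by rw [sub_zero, abs_of_pos hΔx]; ring



/-- If `h` is `(n+1)`-times continuously differentiable on the interval covering the
cells `I_j, …, I_{j+n+1}`, with `(n+1)`-th derivative bounded by `M`, and `f_k` are the
exact cell averages of `h`, then the `(n+1)`-th order finite difference of the cell
averages is bounded by `M·Δx^(n+1)`; hence the ENO-AO smoothness indicator on a smooth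
stencil is `O(Δx^(n+1))`. -/
theorem smoothness_indicator_smooth_bound
    (n : ℕ) (Δx : ℝ) (hΔx : 0 < Δx) (j : ℤ) (M : ℝ) (h : ℝ → ℝ) (f : ℤ → ℝ)
    (hsmooth : ContDiffOn ℝ (n + 1) h
      (Set.Icc ((j : ℝ) * Δx - Δx / 2) (((j : ℝ) + (n + 1)) * Δx + Δx / 2)))
    (hbound : ∀ ξ ∈ Set.Icc ((j : ℝ) * Δx - Δx / 2) (((j : ℝ) + (n + 1)) * Δx + Δx / 2),
      |iteratedDerivWithin (n + 1) h
        (Set.Icc ((j : ℝ) * Δx - Δx / 2) (((j : ℝ) + (n + 1)) * Δx + Δx / 2)) ξ| ≤ M)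
    (hf : ∀ i : ℕ, i ≤ n + 1 →
      f (j + i) = (1 / Δx) * ∫ x in (((j : ℝ) + i) * Δx - Δx / 2)..(((j : ℝ) + i) * Δx + Δx / 2), h x) :
    |∑ i ∈ Finset.range (n + 2),
        (-1 : ℝ) ^ (n + 1 - i) * ((n + 1).choose i : ℝ) * f (j + i)|
      ≤ M * Δx ^ (n + 1) := by
  set a : ℝ := (j : ℝ) * Δx - Δx / 2 with ha
  set B : ℝ := ((j : ℝ) + (n + 1)) * Δx + Δx / 2 with hB
  have hBa : B = a + (n + 2) * Δx := by rw [ha, hB]; push_cast; ring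
  have haB : a ≤ B := by nlinarith [(Nat.cast_nonneg n : (0:ℝ) ≤ n)]
  have hM0 : 0 ≤ M := le_trans (abs_nonneg _) (hbound a ⟨le_refl a, haB⟩)
  have hcont : ContinuousOn h (Set.Icc a B) := hsmooth.continuousOn
  have hg : ContDiffOn ℝ ((n + 1 : ℕ) : WithTop ℕ∞) h (Set.Icc a B) := by
    exact_mod_cast hsmooth
  have hterm : ∀ i : ℕ, i < n + 2 →
      f (j + i) = (1 / Δx) * ∫ s in (0:ℝ)..Δx, h (a + i * Δx + s) := by
    intro i hi
    rw [hf i (by omega)]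
    congr 1
    have h2 : (∫ s in (0:ℝ)..Δx, h (a + i * Δx + s))
        = ∫ x in (a + i * Δx + 0)..(a + i * Δx + Δx), h x :=
      intervalIntegral.integral_comp_add_left h _
    rw [h2]
    congr 1 <;> (rw [ha]; push_cast; ring)
  have hcomp : ∀ i : ℕ, i < n + 2 →
      ContinuousOn (fun s : ℝ => h (a + s + i * Δx)) (Set.uIcc 0 Δx) := by
    intro i hi
    apply hcont.comp (Continuous.continuousOn (by continuity))
    intro s hs
    rw [Set.uIcc_of_le hΔx.le] at hs
    have hin : (i : ℝ) ≤ n + 1 := by exact_mod_cast Nat.lt_succ_iff.mp hi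
    have h0i : (0:ℝ) ≤ i := Nat.cast_nonneg i
    simp only [Set.mem_Icc, hBa]
    constructor <;> nlinarith [hs.1, hs.2]
  have expand : ∑ i ∈ Finset.range (n + 2),
        (-1 : ℝ) ^ (n + 1 - i) * ((n + 1).choose i : ℝ) * f (j + i)
      = (1 / Δx) * ∫ s in (0:ℝ)..Δx, ∑ i ∈ Finset.range (n + 2),
          (-1 : ℝ) ^ (n + 1 - i) * ((n + 1).choose i : ℝ) * h ((a + s) + i * Δx) := by
    rw [intervalIntegral.integral_finset_sum (fun i hi =>
      (show ContinuousOn (fun s : ℝ => (-1 : ℝ) ^ (n + 1 - i) * ((n + 1).choose i : ℝ) * h (a + s + i * Δx))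
          (Set.uIcc 0 Δx) from continuousOn_const.mul (hcomp i (Finset.mem_range.mp hi))).intervalIntegrable)]
    rw [Finset.mul_sum]
    refine Finset.sum_congr rfl fun i hi => ?_
    rw [hterm i (Finset.mem_range.mp hi)]
    simp only [show ∀ s : ℝ, a + i * Δx + s = a + s + i * Δx from fun s => by ring]
    rw [intervalIntegral.integral_const_mul]
    ring
  rw [expand]
  have hb : ∀ s ∈ Set.uIoc (0:ℝ) Δx,
      ‖∑ i ∈ Finset.range (n + 2),
          (-1 : ℝ) ^ (n + 1 - i) * ((n + 1).choose i : ℝ) * h ((a + s) + i * Δx)‖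
        ≤ M * Δx ^ (n + 1) := by
    intro s hs
    rw [Set.uIoc_of_le hΔx.le] at hs
    have h3 := key Δx hΔx a B (n + 1) h M hg hbound (a + s)
      (by linarith [hs.1]) (by rw [hBa]; push_cast; linarith [hs.2])
    rw [fwdDiff_iter_eq_sum_real] at h3
    simpa [Real.norm_eq_abs] using h3
  have h4 : ‖∫ s in (0:ℝ)..Δx, ∑ i ∈ Finset.range (n + 2),
        (-1 : ℝ) ^ (n + 1 - i) * ((n + 1).choose i : ℝ) * h ((a + s) + i * Δx)‖
      ≤ (M * Δx ^ (n + 1)) * |Δx - 0| :=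
    intervalIntegral.norm_integral_le_of_norm_le_const hb
  rw [sub_zero, abs_of_pos hΔx] at h4
  rw [abs_mul, abs_of_pos (by positivity : (0:ℝ) < 1 / Δx)]
  calc (1 / Δx) * |∫ s in (0:ℝ)..Δx, ∑ i ∈ Finset.range (n + 2),
          (-1 : ℝ) ^ (n + 1 - i) * ((n + 1).choose i : ℝ) * h ((a + s) + i * Δx)|
      ≤ (1 / Δx) * ((M * Δx ^ (n + 1)) * Δx) := by
        apply mul_le_mul_of_nonneg_left _ (by positivity)
        simpa [Real.norm_eq_abs] using h4
    _ = M * Δx ^ (n + 1) := by field_simp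
end

section
/- Let n ≥ 0, let a, b be real numbers, let j ∈ ℤ, and let 0 ≤ r ≤ n. Suppose the cell-average data contain a single jump inside the stencil: f_{j+i} = a for 0 ≤ i ≤ r and f_{j+i} = b for r+1 ≤ i ≤ n+1. Then the (n+1)-th order finite difference of the data satisfies ∑_{i=0}^{n+1} (−1)^i C(n+1, i) f_{j+i} = (−1)^r C(n, r)·(a − b); in particular its absolute value equals C(n, r)·|a − b|, which is bounded below by |a − b| and does not tend to zero as the mesh is refined. This is the sense in which the ENO-AO smoothness indicator of a stencil containing a discontinuity is O(1). -/
/-- Partial alternating sum of binomial coefficients. -/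
lemma partial_alt_sum (n r : ℕ) (hr : r ≤ n) :
    ∑ i ∈ Finset.range (r + 1), (-1 : ℝ) ^ i * ((n + 1).choose i : ℝ)
      = (-1 : ℝ) ^ r * (n.choose r : ℝ) := by
  induction r with
  | zero => simp
  | succ k ih =>
    rw [Finset.sum_range_succ, ih (Nat.le_of_succ_le hr)]
    have h := Nat.choose_succ_succ n k
    have : ((n + 1).choose (k + 1) : ℝ) = (n.choose k : ℝ) + (n.choose (k + 1) : ℝ) := by
      rw [h]; push_cast; ring
    rw [this]; ring

/-- Full alternating sum of binomial coefficients vanishes. -/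
lemma full_alt_sum (n : ℕ) :
    ∑ i ∈ Finset.range (n + 2), (-1 : ℝ) ^ i * ((n + 1).choose i : ℝ) = 0 := by
  have h := Int.alternating_sum_range_choose (n := n + 1)
  simp only [Nat.succ_ne_zero, if_false] at h
  have : ((∑ i ∈ Finset.range (n + 2), (-1 : ℤ) ^ i * ((n + 1).choose i) : ℤ) : ℝ) = 0 := by
    rw [h]; norm_num
  push_cast at this
  convert this using 2

/-- If the cell-average data have a single jump inside the stencil (`f_{j+i} = a` for
`i ≤ r` and `f_{j+i} = b` for `r+1 ≤ i ≤ n+1`), then the `(n+1)`-th order finite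
difference equals `(−1)^r·C(n,r)·(a−b)`; its absolute value is `C(n,r)·|a−b| ≥ |a−b|`,
so the ENO-AO smoothness indicator of a stencil containing a discontinuity is `O(1)`. -/
theorem smoothness_indicator_discontinuity
    (n : ℕ) (a b : ℝ) (j : ℤ) (r : ℕ) (hr : r ≤ n) (f : ℤ → ℝ)
    (ha : ∀ i : ℕ, i ≤ r → f (j + i) = a)
    (hb : ∀ i : ℕ, r + 1 ≤ i → i ≤ n + 1 → f (j + i) = b) :
    (∑ i ∈ Finset.range (n + 2), (-1 : ℝ) ^ i * ((n + 1).choose i : ℝ) * f (j + i)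
        = (-1 : ℝ) ^ r * (n.choose r : ℝ) * (a - b)) ∧
    |∑ i ∈ Finset.range (n + 2), (-1 : ℝ) ^ i * ((n + 1).choose i : ℝ) * f (j + i)|
        = (n.choose r : ℝ) * |a - b| ∧
    |a - b| ≤ (n.choose r : ℝ) * |a - b| := by
  have hS := partial_alt_sum n r hr
  have hT := full_alt_sum n
  have hsplit : Finset.range (n + 2) = Finset.range (r + 1) ∪ Finset.Ico (r + 1) (n + 2) := by
    rw [Finset.range_eq_Ico, Finset.range_eq_Ico,
      Finset.Ico_union_Ico_eq_Ico (by omega) (by omega)]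
  have hdisj : Disjoint (Finset.range (r + 1)) (Finset.Ico (r + 1) (n + 2)) := by
    simp [Finset.disjoint_left, Finset.mem_range, Finset.mem_Ico]
    omega
  have key : ∑ i ∈ Finset.range (n + 2), (-1 : ℝ) ^ i * ((n + 1).choose i : ℝ) * f (j + i)
      = (-1 : ℝ) ^ r * (n.choose r : ℝ) * (a - b) := by
    rw [hsplit, Finset.sum_union hdisj]
    have h1 : ∑ i ∈ Finset.range (r + 1), (-1 : ℝ) ^ i * ((n + 1).choose i : ℝ) * f (j + i)
        = (∑ i ∈ Finset.range (r + 1), (-1 : ℝ) ^ i * ((n + 1).choose i : ℝ)) * a := by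
      rw [Finset.sum_mul]
      refine Finset.sum_congr rfl fun i hi => ?_
      rw [ha i (by simpa [Nat.lt_succ_iff] using Finset.mem_range.mp hi)]
    have h2 : ∑ i ∈ Finset.Ico (r + 1) (n + 2), (-1 : ℝ) ^ i * ((n + 1).choose i : ℝ) * f (j + i)
        = (∑ i ∈ Finset.Ico (r + 1) (n + 2), (-1 : ℝ) ^ i * ((n + 1).choose i : ℝ)) * b := by
      rw [Finset.sum_mul]
      refine Finset.sum_congr rfl fun i hi => ?_
      obtain ⟨hi1, hi2⟩ := Finset.mem_Ico.mp hi
      rw [hb i hi1 (by omega)]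
    have h3 : ∑ i ∈ Finset.Ico (r + 1) (n + 2), (-1 : ℝ) ^ i * ((n + 1).choose i : ℝ)
        = -((-1 : ℝ) ^ r * (n.choose r : ℝ)) := by
      have := Finset.sum_union (f := fun i => (-1 : ℝ) ^ i * ((n + 1).choose i : ℝ)) hdisj
      rw [← hsplit] at this
      rw [hT, hS] at this
      linarith
    rw [h1, h2, h3, hS]; ring
  refine ⟨key, ?_, ?_⟩
  · rw [key, abs_mul, abs_mul, abs_pow, abs_neg, abs_one, one_pow, one_mul,
      Nat.abs_cast]
  · have h1 : (1 : ℝ) ≤ (n.choose r : ℝ) := by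
      exact_mod_cast Nat.one_le_iff_ne_zero.mpr (Nat.choose_pos hr).ne'
    exact le_mul_of_one_le_left (abs_nonneg _) h1
end
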